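/- Let r > 0 be real. Let a : ℕ → ℝ satisfy 0 ≤ a_k ≤ r for all k and a_k = r for infinitely many k, and let b : ℕ → ℝ satisfy 0 ≤ b_k ≤ r for all k and b_k = 0 for all k ≥ N, for some N ∈ ℕ. Then there exists γ₀ ∈ (0,1) such that for every γ with γ₀ < γ < 1, the discounted sums satisfy ∑_{k=0}^{∞} γ^k·a_k > ∑_{k=0}^{∞} γ^k·b_k (both series converge for every γ ∈ [0,1)). -/

import Mathlib

/-- Key quantitative step of Theorem 2: if rewards `a` (each in `[0,r]`) equal
`r` infinitely often while rewards `b` (each in `[0,r]`) vanish from some time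
`N` on, then for `γ` close enough to `1` the discounted sum of `a` strictly
exceeds that of `b`; both discounted series converge for every `γ ∈ [0,1)`. -/
theorem infinitely_often_beats_finitely_many (r : ℝ) (hr : 0 < r)
    (a b : ℕ → ℝ) (N : ℕ)
    (ha0 : ∀ k, 0 ≤ a k) (har : ∀ k, a k ≤ r)
    (hainf : {k : ℕ | a k = r}.Infinite)
    (hb0 : ∀ k, 0 ≤ b k) (hbr : ∀ k, b k ≤ r)
    (hbN : ∀ k, N ≤ k → b k = 0) :
    (∀ γ : ℝ, 0 ≤ γ → γ < 1 →
      Summable (fun k : ℕ => γ ^ k * a k) ∧ Summable (fun k : ℕ => γ ^ k * b k)) ∧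
    ∃ γ₀ ∈ Set.Ioo (0 : ℝ) 1, ∀ γ : ℝ, γ₀ < γ → γ < 1 →
      (∑' k : ℕ, γ ^ k * a k) > (∑' k : ℕ, γ ^ k * b k) := by
  -- summability
  have hsum : ∀ γ : ℝ, 0 ≤ γ → γ < 1 →
      Summable (fun k : ℕ => γ ^ k * a k) ∧ Summable (fun k : ℕ => γ ^ k * b k) := by
    intro γ h0 h1
    constructor
    · refine Summable.of_nonneg_of_le (fun k => ?_) (fun k => ?_)
        ((summable_geometric_of_lt_one h0 h1).mul_right r)
      · exact mul_nonneg (pow_nonneg h0 k) (ha0 k)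
      · exact mul_le_mul_of_nonneg_left (har k) (pow_nonneg h0 k)
    · refine summable_of_ne_finset_zero (s := Finset.range N) (fun k hk => ?_)
      simp only [Finset.mem_range, not_lt] at hk
      simp [hbN k hk]
  refine ⟨hsum, ?_⟩
  -- choose N+1 indices where a = r
  obtain ⟨t, hts, htc⟩ := hainf.exists_subset_card_eq (N + 1)
  have htne : t.Nonempty := Finset.card_pos.mp (by rw [htc]; exact Nat.succ_pos N)
  set K : ℕ := t.max' htne with hK
  -- choice of γ₀
  set γ₀ : ℝ := max (1 / 2) (1 - 1 / (2 * (K + 1) * (N + 1))) with hγ₀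
  have hden : (0:ℝ) < 2 * (K + 1) * (N + 1) := by positivity
  have hγ₀0 : (0:ℝ) < γ₀ := lt_of_lt_of_le (by norm_num) (le_max_left _ _)
  have hγ₀1 : γ₀ < 1 := by
    apply max_lt (by norm_num)
    have : (0:ℝ) < 1 / (2 * (K + 1) * (N + 1)) := by positivity
    linarith
  refine ⟨γ₀, ⟨hγ₀0, hγ₀1⟩, fun γ hγl hγu => ?_⟩
  have hγ0 : (0:ℝ) ≤ γ := le_of_lt (lt_trans hγ₀0 hγl)
  have hγ1 : γ ≤ 1 := le_of_lt hγu
  obtain ⟨hsa, hsb⟩ := hsum γ hγ0 hγu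
  -- key: (N+1) * γ₀^K > N
  have hbern : 1 + (K : ℝ) * (γ₀ - 1) ≤ γ₀ ^ K := by
    have h := one_add_mul_le_pow (a := γ₀ - 1) (by linarith) K
    simpa using h
  have hγ₀low : 1 - 1 / (2 * (K + 1) * (N + 1)) ≤ γ₀ := le_max_right _ _
  have hkey : ((N:ℝ) + 1) * γ₀ ^ K > N := by
    have h1 : (K : ℝ) * (1 - γ₀) ≤ (K : ℝ) / (2 * (K + 1) * (N + 1)) := by
      have : 1 - γ₀ ≤ 1 / (2 * (K + 1) * (N + 1)) := by linarith
      have hK0 : (0:ℝ) ≤ K := Nat.cast_nonneg K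
      calc (K : ℝ) * (1 - γ₀) ≤ (K : ℝ) * (1 / (2 * (K + 1) * (N + 1))) :=
            mul_le_mul_of_nonneg_left this hK0
        _ = (K : ℝ) / (2 * (K + 1) * (N + 1)) := by ring
    have h2 : (K : ℝ) / (2 * (K + 1) * (N + 1)) < 1 / ((N:ℝ) + 1) := by
      rw [div_lt_div_iff₀ hden (by positivity)]
      have hK0 : (0:ℝ) ≤ K := Nat.cast_nonneg K
      nlinarith
    have h3 : 1 + (K : ℝ) * (γ₀ - 1) > 1 - 1 / ((N:ℝ) + 1) := by nlinarith
    have h4 : γ₀ ^ K > 1 - 1 / ((N:ℝ) + 1) := lt_of_lt_of_le h3 hbern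
    have hN1 : (0:ℝ) < (N:ℝ) + 1 := by positivity
    rw [gt_iff_lt, ← sub_pos]
    have : ((N:ℝ) + 1) * γ₀ ^ K - N > ((N:ℝ) + 1) * (1 - 1 / ((N:ℝ)+1)) - N := by
      nlinarith
    have heq : ((N:ℝ) + 1) * (1 - 1 / ((N:ℝ)+1)) - N = 0 := by
      field_simp
      ring
    linarith
  have hγK : γ₀ ^ K ≤ γ ^ K := pow_le_pow_left₀ (le_of_lt hγ₀0) (le_of_lt hγl) K
  -- lower bound for a-sum
  have hlow : r * (((N:ℝ) + 1) * γ ^ K) ≤ (∑' k : ℕ, γ ^ k * a k) := by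
    have hsumt : ∑ k ∈ t, γ ^ k * a k ≤ ∑' k : ℕ, γ ^ k * a k :=
      Summable.sum_le_tsum t (fun k _ => mul_nonneg (pow_nonneg hγ0 k) (ha0 k)) hsa
    have hterm : ∀ k ∈ t, γ ^ K * r ≤ γ ^ k * a k := by
      intro k hk
      have hak : a k = r := hts hk
      have hkK : k ≤ K := Finset.le_max' t k hk
      have : γ ^ K ≤ γ ^ k := pow_le_pow_of_le_one hγ0 hγ1 hkK
      rw [hak]
      exact mul_le_mul_of_nonneg_right this (le_of_lt hr)
    have : ∑ k ∈ t, (γ ^ K * r) ≤ ∑ k ∈ t, γ ^ k * a k := Finset.sum_le_sum hterm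
    rw [Finset.sum_const, htc] at this
    have heq : (N + 1) • (γ ^ K * r) = r * (((N:ℝ) + 1) * γ ^ K) := by
      simp [nsmul_eq_mul]; ring
    rw [heq] at this
    linarith
  -- upper bound for b-sum
  have hup : (∑' k : ℕ, γ ^ k * b k) ≤ r * N := by
    have heq : (∑' k : ℕ, γ ^ k * b k) = ∑ k ∈ Finset.range N, γ ^ k * b k := by
      refine tsum_eq_sum (fun k hk => ?_)
      simp only [Finset.mem_range, not_lt] at hk
      simp [hbN k hk]
    rw [heq]
    calc ∑ k ∈ Finset.range N, γ ^ k * b k ≤ ∑ _k ∈ Finset.range N, r := by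
          refine Finset.sum_le_sum (fun k _ => ?_)
          calc γ ^ k * b k ≤ 1 * r := by
                exact mul_le_mul (pow_le_one₀ hγ0 hγ1) (hbr k) (hb0 k) one_pos.le
            _ = r := one_mul r
      _ = r * N := by rw [Finset.sum_const, Finset.card_range, nsmul_eq_mul]; ring
  have : r * N < r * (((N:ℝ) + 1) * γ ^ K) := by
    have h1 : (N:ℝ) < ((N:ℝ) + 1) * γ ^ K := by
      calc (N:ℝ) < ((N:ℝ) + 1) * γ₀ ^ K := hkey
        _ ≤ ((N:ℝ) + 1) * γ ^ K := by
            apply mul_le_mul_of_nonneg_left hγK (by positivity)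
    exact mul_lt_mul_of_pos_left h1 hr
  linarith
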